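/- Let v(t,x) := (1/√(4πt)) ∫₀^∞ (e^{−(x−y)²/(4t)} − e^{−(x+y)²/(4t)}) v₀(y) dy for t > 0, x > 0, where v₀(x) = 1 for 0 < x ≤ 1 and v₀(x) = 1/x² for x > 1. Then there exist constants C₂ > C₁ > 0 and T > e such that C₁·x·(ln t)/t^{3/2} ≤ v(t,x) ≤ C₂·x·(ln t)/t^{3/2} for all t ≥ T and all x ∈ (1, ln t). -/

import Mathlib

open Real Filter MeasureTheory Set

noncomputable section

/-- The initial datum `v₀(x) = 1` for `0 < x ≤ 1`, `v₀(x) = 1/x²` for `x > 1`. -/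
def v₀ (x : ℝ) : ℝ := if x ≤ 1 then 1 else 1 / x ^ 2

/-- The solution of the Dirichlet heat equation on the half-line with initial datum `v₀`. -/
def vheat (t x : ℝ) : ℝ :=
  (Real.sqrt (4 * Real.pi * t))⁻¹ *
    ∫ y in Set.Ioi (0 : ℝ),
      (Real.exp (-(x - y) ^ 2 / (4 * t)) - Real.exp (-(x + y) ^ 2 / (4 * t))) * v₀ y

lemma v0_nonneg (y : ℝ) : 0 ≤ v₀ y := by
  unfold v₀; split <;> positivity

lemma v0_le_one (y : ℝ) : v₀ y ≤ 1 := by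
  unfold v₀; split
  · exact le_refl 1
  · rename_i h
    push_neg at h
    rw [div_le_one (by positivity)]
    nlinarith

lemma mul_v0_le_one {y : ℝ} (hy : 0 < y) : y * v₀ y ≤ 1 := by
  unfold v₀; split
  · rename_i h; simpa using h
  · rename_i h
    push_neg at h
    rw [mul_one_div, div_le_one (by positivity)]
    nlinarith

lemma v0_measurable : Measurable v₀ := by
  unfold v₀
  exact Measurable.ite (measurableSet_le measurable_id measurable_const)
    measurable_const (measurable_const.div (measurable_id.pow_const 2))

lemma exp_diff_le (a b : ℝ) :
    Real.exp (-a) - Real.exp (-b) ≤ (b - a) * Real.exp (-a) := by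
  have e1 : Real.exp (-b) = Real.exp (-a) * Real.exp (a - b) := by
    rw [← Real.exp_add]; ring_nf
  nlinarith [Real.add_one_le_exp (a - b), Real.exp_pos (-a)]

lemma le_exp_diff (a b : ℝ) :
    (b - a) * Real.exp (-b) ≤ Real.exp (-a) - Real.exp (-b) := by
  have e1 : Real.exp (-a) = Real.exp (-b) * Real.exp (b - a) := by
    rw [← Real.exp_add]; ring_nf
  nlinarith [Real.add_one_le_exp (b - a), Real.exp_pos (-b)]

lemma gaussian_integrable {t : ℝ} (ht : 0 < t) (x : ℝ) :
    Integrable (fun y : ℝ => Real.exp (-(x - y) ^ 2 / (4 * t))) := by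
  have h : Integrable (fun y : ℝ => Real.exp (-(1 / (4 * t)) * (y - x) ^ 2)) :=
    (integrable_exp_neg_mul_sq (show (0:ℝ) < 1 / (4 * t) by positivity)).comp_sub_right x
  convert h using 2 with y
  ring_nf

lemma gaussian_integral_eq {t : ℝ} (ht : 0 < t) (x : ℝ) :
    ∫ y : ℝ, Real.exp (-(x - y) ^ 2 / (4 * t)) = Real.sqrt (4 * Real.pi * t) := by
  have h1 : (fun y : ℝ => Real.exp (-(x - y) ^ 2 / (4 * t)))
      = fun y : ℝ => Real.exp (-(1 / (4 * t)) * ((y - x) ^ 2)) := by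
    funext y; ring_nf
  rw [h1, integral_sub_right_eq_self (fun y : ℝ => Real.exp (-(1 / (4 * t)) * y ^ 2)) x,
    integral_gaussian]
  congr 1
  field_simp

set_option maxHeartbeats 1000000 in
/-- Lemma 5.4: two-sided estimate `v(t,x) ≍ x ln t / t^{3/2}` for `x ∈ (1, ln t)`. -/
theorem vheat_two_sided :
    ∃ C₁ C₂ T : ℝ, 0 < C₁ ∧ C₁ < C₂ ∧ Real.exp 1 < T ∧
      ∀ t : ℝ, T ≤ t → ∀ x : ℝ, 1 < x → x < Real.log t →
        C₁ * (x * Real.log t / t ^ ((3 : ℝ) / 2)) ≤ vheat t x ∧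
        vheat t x ≤ C₂ * (x * Real.log t / t ^ ((3 : ℝ) / 2)) := by
  have hP : (0 : ℝ) < Real.sqrt (4 * Real.pi) := Real.sqrt_pos.2 (by positivity)
  have hP1 : (1 : ℝ) ≤ Real.sqrt (4 * Real.pi) := by
    rw [show (1:ℝ) = Real.sqrt 1 from (Real.sqrt_one).symm]
    exact Real.sqrt_le_sqrt (by nlinarith [Real.pi_gt_three])
  set P := Real.sqrt (4 * Real.pi) with hPdef
  refine ⟨Real.exp (-1) / (2 * P), 2 / P + 1, 10, by positivity, ?_, ?_, ?_⟩
  · have h1 : Real.exp (-1) < 1 := by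
      rw [Real.exp_lt_one_iff]; norm_num
    have h2 : Real.exp (-1) / (2 * P) ≤ 1 / (2 * P) := by
      gcongr
    have h3 : 1 / (2 * P) ≤ 1 / 2 := by
      apply one_div_le_one_div_of_le <;> linarith
    have h4 : 0 < 2 / P := by positivity
    linarith
  · nlinarith [Real.exp_one_lt_d9]
  intro t ht x hx1 hxlog
  have ht0 : (0 : ℝ) < t := by linarith
  have ht1 : (1 : ℝ) < t := by linarith
  have hx0 : (0 : ℝ) < x := by linarith
  set s := Real.sqrt t with hsdef
  have hs0 : 0 < s := Real.sqrt_pos.2 ht0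
  have hs1 : 1 < s := by
    rw [hsdef, show (1:ℝ) = Real.sqrt 1 from (Real.sqrt_one).symm]
    exact Real.sqrt_lt_sqrt (by norm_num) ht1
  have hss : s ^ 2 = t := Real.sq_sqrt ht0.le
  have hst : s ≤ t := by nlinarith
  set L := Real.log t with hLdef
  have hL1 : 1 ≤ L := by
    rw [hLdef, Real.le_log_iff_exp_le ht0]
    nlinarith [Real.exp_one_lt_d9]
  -- log t ≤ √t
  have hLs : L ≤ s := by
    have h2 : Real.log (s / 2) ≤ s / 2 - 1 := Real.log_le_sub_one_of_pos (by positivity)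
    have h3 : Real.log s = Real.log (s / 2) + Real.log 2 := by
      rw [← Real.log_mul (by positivity) (by norm_num)]
      norm_num
    have h4 : Real.log s = L / 2 := by rw [hLdef, hsdef, Real.log_sqrt ht0.le]
    nlinarith [Real.log_two_lt_d9]
  have hxs : x < s := lt_of_lt_of_le hxlog hLs
  -- the rpow
  have hrpow : t ^ ((3 : ℝ) / 2) = t * s := by
    rw [show ((3:ℝ)/2) = 1 + 1/2 by norm_num, Real.rpow_add ht0, Real.rpow_one,
      hsdef, Real.sqrt_eq_rpow]
  -- the kernel functions
  set f : ℝ → ℝ := fun y =>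
    (Real.exp (-(x - y) ^ 2 / (4 * t)) - Real.exp (-(x + y) ^ 2 / (4 * t))) * v₀ y with hfdef
  set g : ℝ → ℝ := fun y => Real.exp (-(x - y) ^ 2 / (4 * t)) with hgdef
  have hg_int : Integrable g := gaussian_integrable ht0 x
  have hg_nonneg : ∀ y, 0 ≤ g y := fun y => (Real.exp_pos _).le
  have hg_le_one : ∀ y, g y ≤ 1 := by
    intro y
    rw [hgdef]
    simp only
    rw [Real.exp_le_one_iff]
    have : 0 ≤ (x - y) ^ 2 := sq_nonneg _
    have h4t : 0 < 4 * t := by positivity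
    rw [div_nonpos_iff]
    right; constructor <;> nlinarith
  -- the difference of exponentials, rewritten
  have hkey : ∀ y : ℝ,
      Real.exp (-(x - y) ^ 2 / (4 * t)) - Real.exp (-(x + y) ^ 2 / (4 * t))
        = Real.exp (-((x - y) ^ 2 / (4 * t))) - Real.exp (-((x + y) ^ 2 / (4 * t))) := by
    intro y
    rw [neg_div, neg_div]
  have hba : ∀ y : ℝ, (x + y) ^ 2 / (4 * t) - (x - y) ^ 2 / (4 * t) = x * y / t := by
    intro y
    field_simp
    ring
  have hab : ∀ y : ℝ, 0 ≤ y → (x - y) ^ 2 / (4 * t) ≤ (x + y) ^ 2 / (4 * t) := by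
    intro y hy
    have h : (x - y) ^ 2 ≤ (x + y) ^ 2 := by nlinarith
    exact div_le_div_of_nonneg_right h (by positivity)  -- name may need fixing
  -- pointwise upper bound on (0,∞): f y ≤ x/t * (y * v₀ y) * g y
  have hf_upper : ∀ y ∈ Ioi (0:ℝ), f y ≤ x / t * (y * v₀ y) * g y := by
    intro y hy
    simp only [mem_Ioi] at hy
    have h1 := exp_diff_le ((x - y) ^ 2 / (4 * t)) ((x + y) ^ 2 / (4 * t))
    rw [hba y] at h1
    have h2 : f y ≤ (x * y / t * Real.exp (-((x - y) ^ 2 / (4 * t)))) * v₀ y := by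
      rw [hfdef]
      simp only
      rw [hkey y]
      exact mul_le_mul_of_nonneg_right h1 (v0_nonneg y)
    calc f y ≤ (x * y / t * Real.exp (-((x - y) ^ 2 / (4 * t)))) * v₀ y := h2
      _ = x / t * (y * v₀ y) * g y := by rw [hgdef]; simp only; rw [neg_div]; ring
  -- pointwise nonnegativity on (0,∞)
  have hf_nonneg : ∀ y ∈ Ioi (0:ℝ), 0 ≤ f y := by
    intro y hy
    simp only [mem_Ioi] at hy
    apply mul_nonneg _ (v0_nonneg y)
    rw [hkey y]
    have := le_exp_diff ((x - y) ^ 2 / (4 * t)) ((x + y) ^ 2 / (4 * t))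
    rw [hba y] at this
    have h3 : 0 ≤ x * y / t * Real.exp (-((x + y) ^ 2 / (4 * t))) := by positivity
    linarith
  have hf_meas : Measurable f := by
    exact Measurable.mul (by fun_prop) v0_measurable
  -- integrability of f on Ioi 0
  have hf_int : IntegrableOn f (Ioi (0:ℝ)) := by
    apply Integrable.mono' hg_int.integrableOn (hf_meas.aestronglyMeasurable.restrict)
    filter_upwards [ae_restrict_mem measurableSet_Ioi] with y hy
    rw [Real.norm_eq_abs, abs_of_nonneg (hf_nonneg y hy)]
    have hxt : x / t ≤ 1 := by
      rw [div_le_one ht0]; linarith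
    calc f y ≤ x / t * (y * v₀ y) * g y := hf_upper y hy
      _ ≤ 1 * 1 * g y := by
          apply mul_le_mul_of_nonneg_right _ (hg_nonneg y)
          apply mul_le_mul hxt (mul_v0_le_one hy) _ zero_le_one
          exact mul_nonneg hy.le (v0_nonneg y)
      _ = g y := by ring
  have hPs' : Real.sqrt (4 * Real.pi * t) = P * s := Real.sqrt_mul (by positivity) t
  have hv : vheat t x = (P * s)⁻¹ * ∫ y in Ioi (0:ℝ), f y := by
    unfold vheat
    rw [hPs']
  have hPsinv : (0:ℝ) ≤ (P * s)⁻¹ := by positivity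
  rw [hv, hrpow]
  -- integrability of 1/y on Ioc 1 u
  have hone_div_int : ∀ u : ℝ, 1 ≤ u → IntegrableOn (fun y : ℝ => 1 / y) (Ioc 1 u) := by
    intro u hu
    have hIV : IntervalIntegrable (fun y : ℝ => 1 / y) volume 1 u :=
      intervalIntegral.intervalIntegrable_one_div
        (fun z hz => by
          rw [Set.uIcc_of_le hu] at hz
          have h1 := hz.1
          intro h0
          rw [h0] at h1
          linarith)
        continuousOn_id
    exact hIV.1
  have hIoc_sub : ∀ u : ℝ, Ioc (1:ℝ) u ⊆ Ioi 0 := by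
    intro u y hy
    exact lt_trans one_pos hy.1
  constructor
  · -- LOWER BOUND
    have hlowint : IntegrableOn (fun y : ℝ => Real.exp (-1) * x / t * (1 / y)) (Ioc 1 s) :=
      (hone_div_int s hs1.le).const_mul _
    have hstep1 : ∫ y in Ioc (1:ℝ) s, Real.exp (-1) * x / t * (1 / y) ≤ ∫ y in Ioc (1:ℝ) s, f y := by
      apply setIntegral_mono_on hlowint (hf_int.mono_set (hIoc_sub s)) measurableSet_Ioc
      intro y hy
      have hy1 : (1:ℝ) < y := hy.1
      have hy0 : (0:ℝ) < y := lt_trans one_pos hy1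
      have hv0y : v₀ y = 1 / y ^ 2 := if_neg (not_le.2 hy1)
      have hlem := le_exp_diff ((x - y) ^ 2 / (4 * t)) ((x + y) ^ 2 / (4 * t))
      rw [hba y] at hlem
      have h0 : (0:ℝ) ≤ 1 / y ^ 2 := by positivity
      have h1 : x * y / t * Real.exp (-((x + y) ^ 2 / (4 * t))) * (1 / y ^ 2) ≤ f y := by
        simp only [hfdef]
        rw [hkey y, hv0y]
        exact mul_le_mul_of_nonneg_right hlem h0
      have hexp : Real.exp (-1) ≤ Real.exp (-((x + y) ^ 2 / (4 * t))) := by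
        apply Real.exp_le_exp.2
        rw [neg_le_neg_iff, div_le_one (by positivity)]
        have h2s : (x + y) ^ 2 ≤ (2 * s) ^ 2 := pow_le_pow_left₀ (by linarith) (by linarith [hy.2]) 2
        have h4 : (2 * s) ^ 2 = 4 * s ^ 2 := by ring
        linarith [hss]
      have heq : Real.exp (-1) * x / t * (1 / y)
          = x * y / t * Real.exp (-1) * (1 / y ^ 2) := by
        field_simp
      have h2 : Real.exp (-1) * x / t * (1 / y)
          ≤ x * y / t * Real.exp (-((x + y) ^ 2 / (4 * t))) * (1 / y ^ 2) := by
        rw [heq]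
        apply mul_le_mul_of_nonneg_right _ h0
        apply mul_le_mul_of_nonneg_left hexp (by positivity)
      linarith
    have hstep2 : ∫ y in Ioc (1:ℝ) s, f y ≤ ∫ y in Ioi (0:ℝ), f y := by
      apply setIntegral_mono_set hf_int
      · filter_upwards [ae_restrict_mem measurableSet_Ioi] with y hy
        exact hf_nonneg y hy
      · exact HasSubset.Subset.eventuallyLE (hIoc_sub s)
    have hcomp : ∫ y in Ioc (1:ℝ) s, Real.exp (-1) * x / t * (1 / y)
        = Real.exp (-1) * x / t * (L / 2) := by
      rw [← intervalIntegral.integral_of_le hs1.le, intervalIntegral.integral_const_mul,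
        integral_one_div]
      · rw [div_one, show Real.log s = L / 2 by rw [hLdef, hsdef, Real.log_sqrt ht0.le]]
      · rw [Set.uIcc_of_le hs1.le]
        intro h0
        have := h0.1
        linarith
    have heqlow : Real.exp (-1) / (2 * P) * (x * L / (t * s))
        = (P * s)⁻¹ * (Real.exp (-1) * x / t * (L / 2)) := by
      field_simp
    rw [heqlow]
    apply mul_le_mul_of_nonneg_left _ hPsinv
    rw [← hcomp]
    linarith
  · -- UPPER BOUND
    set G : ℝ → ℝ := fun y => x / t * (y * v₀ y) * g y with hGdef
    have hxt : x / t ≤ 1 := by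
      rw [div_le_one ht0]; linarith
    have hG_nonneg : ∀ y ∈ Ioi (0:ℝ), 0 ≤ G y := by
      intro y hy
      simp only [hGdef]
      have hy0 : (0:ℝ) < y := hy
      exact mul_nonneg (mul_nonneg (by positivity) (mul_nonneg hy0.le (v0_nonneg y))) (hg_nonneg y)
    have hG_meas : Measurable G := by
      apply Measurable.mul _ (by fun_prop : Measurable g)
      exact (measurable_id.mul v0_measurable).const_mul _
    have hG_int : IntegrableOn G (Ioi (0:ℝ)) := by
      apply Integrable.mono' hg_int.integrableOn hG_meas.aestronglyMeasurable.restrict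
      filter_upwards [ae_restrict_mem measurableSet_Ioi] with y hy
      rw [Real.norm_eq_abs, abs_of_nonneg (hG_nonneg y hy)]
      simp only [hGdef]
      calc x / t * (y * v₀ y) * g y ≤ 1 * 1 * g y := by
            apply mul_le_mul_of_nonneg_right _ (hg_nonneg y)
            apply mul_le_mul hxt (mul_v0_le_one hy) _ zero_le_one
            exact mul_nonneg (le_of_lt hy) (v0_nonneg y)
        _ = g y := by ring
    have hup0 : ∫ y in Ioi (0:ℝ), f y ≤ ∫ y in Ioi (0:ℝ), G y :=
      setIntegral_mono_on hf_int hG_int measurableSet_Ioi hf_upper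
    -- split the G-integral at t
    have hsplit : Ioi (0:ℝ) = Ioc 0 t ∪ Ioi t := (Set.Ioc_union_Ioi_eq_Ioi ht0.le).symm
    have hG_int1 : IntegrableOn G (Ioc (0:ℝ) t) :=
      hG_int.mono_set (by rw [hsplit]; exact subset_union_left)
    have hG_int2 : IntegrableOn G (Ioi t) :=
      hG_int.mono_set (by rw [hsplit]; exact subset_union_right)
    have hGsplit : ∫ y in Ioi (0:ℝ), G y = (∫ y in Ioc (0:ℝ) t, G y) + ∫ y in Ioi t, G y := by
      rw [hsplit]
      exact setIntegral_union (Set.Ioc_disjoint_Ioi le_rfl) measurableSet_Ioi hG_int1 hG_int2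
    -- piece 1 : over (0, t]
    have hw_meas : Measurable (fun y : ℝ => x / t * (y * v₀ y)) :=
      (measurable_id.mul v0_measurable).const_mul _
    have hconst1 : IntegrableOn (fun _ : ℝ => (1:ℝ)) (Ioc (0:ℝ) t) :=
      integrableOn_const measure_Ioc_lt_top.ne
    have hw_int : IntegrableOn (fun y : ℝ => x / t * (y * v₀ y)) (Ioc (0:ℝ) t) := by
      apply Integrable.mono' hconst1 hw_meas.aestronglyMeasurable.restrict
      filter_upwards [ae_restrict_mem measurableSet_Ioc] with y hy
      have hy0 : (0:ℝ) < y := hy.1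
      rw [Real.norm_eq_abs,
        abs_of_nonneg (mul_nonneg (by positivity) (mul_nonneg hy0.le (v0_nonneg y)))]
      calc x / t * (y * v₀ y) ≤ 1 * 1 := by
            apply mul_le_mul hxt (mul_v0_le_one hy0) _ zero_le_one
            exact mul_nonneg hy0.le (v0_nonneg y)
        _ = 1 := by ring
    have hpiece1a : ∫ y in Ioc (0:ℝ) t, G y ≤ ∫ y in Ioc (0:ℝ) t, x / t * (y * v₀ y) := by
      apply setIntegral_mono_on (hG_int1) hw_int measurableSet_Ioc
      intro y hy
      simp only [hGdef]
      have hy0 : (0:ℝ) < y := hy.1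
      calc x / t * (y * v₀ y) * g y ≤ x / t * (y * v₀ y) * 1 :=
            mul_le_mul_of_nonneg_left (hg_le_one y)
              (mul_nonneg (by positivity) (mul_nonneg hy0.le (v0_nonneg y)))
        _ = x / t * (y * v₀ y) := by ring
    -- split (0, t] at 1
    have hsplit2 : Ioc (0:ℝ) t = Ioc 0 1 ∪ Ioc 1 t := (Set.Ioc_union_Ioc_eq_Ioc zero_le_one ht1.le).symm
    have hw_int1 : IntegrableOn (fun y : ℝ => x / t * (y * v₀ y)) (Ioc (0:ℝ) 1) :=
      hw_int.mono_set (by rw [hsplit2]; exact subset_union_left)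
    have hw_int2 : IntegrableOn (fun y : ℝ => x / t * (y * v₀ y)) (Ioc (1:ℝ) t) :=
      hw_int.mono_set (by rw [hsplit2]; exact subset_union_right)
    have hwsplit : ∫ y in Ioc (0:ℝ) t, x / t * (y * v₀ y)
        = (∫ y in Ioc (0:ℝ) 1, x / t * (y * v₀ y)) + ∫ y in Ioc (1:ℝ) t, x / t * (y * v₀ y) := by
      rw [hsplit2]
      exact setIntegral_union (Set.disjoint_left.2 fun y h1 h2 => absurd h2.1 (not_lt.2 h1.2)) measurableSet_Ioc hw_int1 hw_int2
    have hpart1 : ∫ y in Ioc (0:ℝ) 1, x / t * (y * v₀ y) ≤ x / t := by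
      have hconst : IntegrableOn (fun _ : ℝ => x / t) (Ioc (0:ℝ) 1) :=
        integrableOn_const (by exact measure_Ioc_lt_top.ne)
      calc ∫ y in Ioc (0:ℝ) 1, x / t * (y * v₀ y) ≤ ∫ _ in Ioc (0:ℝ) 1, x / t := by
            apply setIntegral_mono_on hw_int1 hconst measurableSet_Ioc
            intro y hy
            have hy0 : (0:ℝ) < y := hy.1
            calc x / t * (y * v₀ y) ≤ x / t * 1 :=
                  mul_le_mul_of_nonneg_left (mul_v0_le_one hy0) (by positivity)
              _ = x / t := by ring
        _ = x / t := by
            rw [setIntegral_const]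
            simp [Real.volume_Ioc]
    have hpart2 : ∫ y in Ioc (1:ℝ) t, x / t * (y * v₀ y) ≤ x / t * L := by
      have hint2 : IntegrableOn (fun y : ℝ => x / t * (1 / y)) (Ioc (1:ℝ) t) :=
        (hone_div_int t ht1.le).const_mul _
      have hmono : ∫ y in Ioc (1:ℝ) t, x / t * (y * v₀ y) ≤ ∫ y in Ioc (1:ℝ) t, x / t * (1 / y) := by
        apply setIntegral_mono_on hw_int2 hint2 measurableSet_Ioc
        intro y hy
        have hy1 : (1:ℝ) < y := hy.1
        have hy0 : (0:ℝ) < y := lt_trans one_pos hy1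
        have hv0y : v₀ y = 1 / y ^ 2 := if_neg (not_le.2 hy1)
        rw [hv0y]
        apply mul_le_mul_of_nonneg_left _ (by positivity)
        rw [show y * (1 / y ^ 2) = 1 / y by field_simp]
      have hcomp2 : ∫ y in Ioc (1:ℝ) t, x / t * (1 / y) = x / t * L := by
        rw [← intervalIntegral.integral_of_le ht1.le, intervalIntegral.integral_const_mul,
          integral_one_div]
        · rw [div_one, hLdef]
        · rw [Set.uIcc_of_le ht1.le]
          intro h0
          have := h0.1
          linarith
      linarith [hmono, le_of_eq hcomp2]
    -- piece 2 : over (t, ∞)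
    have hpiece2 : ∫ y in Ioi t, G y ≤ x / t ^ 2 * (P * s) := by
      have hint3 : IntegrableOn (fun y : ℝ => x / t ^ 2 * g y) (Ioi t) :=
        (hg_int.const_mul _).integrableOn
      have hmono : ∫ y in Ioi t, G y ≤ ∫ y in Ioi t, x / t ^ 2 * g y := by
        apply setIntegral_mono_on hG_int2 hint3 measurableSet_Ioi
        intro y hy
        have hyt : t < y := hy
        have hy1 : (1:ℝ) < y := lt_trans ht1 hyt
        have hy0 : (0:ℝ) < y := lt_trans one_pos hy1
        have hv0y : v₀ y = 1 / y ^ 2 := if_neg (not_le.2 hy1)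
        simp only [hGdef]
        apply mul_le_mul_of_nonneg_right _ (hg_nonneg y)
        rw [hv0y, show y * (1 / y ^ 2) = 1 / y by field_simp]
        rw [show x / t * (1 / y) = x / (t * y) by field_simp, show x / t ^ 2 = x / (t * t) by ring_nf]
        rw [div_le_div_iff₀ (by positivity) (by positivity)]
        exact mul_le_mul_of_nonneg_left (mul_le_mul_of_nonneg_left hyt.le ht0.le) hx0.le
      have hrest : ∫ y in Ioi t, x / t ^ 2 * g y ≤ x / t ^ 2 * (P * s) := by
        rw [MeasureTheory.integral_const_mul]
        apply mul_le_mul_of_nonneg_left _ (by positivity)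
        calc ∫ y in Ioi t, g y ≤ ∫ y : ℝ, g y :=
              setIntegral_le_integral hg_int (Eventually.of_forall hg_nonneg)
          _ = P * s := by rw [hgdef]; rw [gaussian_integral_eq ht0 x, hPs']
      linarith
    -- combine
    have htotal : ∫ y in Ioi (0:ℝ), f y ≤ 2 * (x / t) * L + x / t ^ 2 * (P * s) := by
      have h1 : x / t + x / t * L ≤ 2 * (x / t) * L := by
        have hxtpos : 0 < x / t := by positivity
        nlinarith
      calc ∫ y in Ioi (0:ℝ), f y ≤ ∫ y in Ioi (0:ℝ), G y := hup0
        _ = (∫ y in Ioc (0:ℝ) t, G y) + ∫ y in Ioi t, G y := hGsplit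
        _ ≤ (x / t + x / t * L) + x / t ^ 2 * (P * s) := by
            have := hpiece1a
            have := hwsplit
            have := hpart1
            have := hpart2
            have := hpiece2
            linarith
        _ ≤ 2 * (x / t) * L + x / t ^ 2 * (P * s) := by linarith
    have e1 : (P * s)⁻¹ * (2 * (x / t) * L + x / t ^ 2 * (P * s))
        = 2 / P * (x * L / (t * s)) + x / t ^ 2 := by
      field_simp
    have e3 : x / t ^ 2 ≤ 1 * (x * L / (t * s)) := by
      rw [one_mul, div_le_div_iff₀ (by positivity) (by positivity)]
      have hxL : x ≤ x * L := le_mul_of_one_le_right hx0.le hL1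
      have h1 : t * s ≤ t * t := mul_le_mul_of_nonneg_left hst ht0.le
      nlinarith [mul_le_mul_of_nonneg_left h1 hx0.le, mul_le_mul_of_nonneg_right hxL (sq_nonneg t)]
    calc (P * s)⁻¹ * ∫ y in Ioi (0:ℝ), f y
        ≤ (P * s)⁻¹ * (2 * (x / t) * L + x / t ^ 2 * (P * s)) :=
          mul_le_mul_of_nonneg_left htotal hPsinv
      _ = 2 / P * (x * L / (t * s)) + x / t ^ 2 := e1
      _ ≤ 2 / P * (x * L / (t * s)) + 1 * (x * L / (t * s)) := by linarith
      _ = (2 / P + 1) * (x * L / (t * s)) := by ring
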